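/- Let p₀ ∈ (1,∞), β, ϱ ≥ 0, and let S be a sublinear operator with ‖Sf‖_{L^{p₀}} ≤ A₁‖f‖_{L^{p₀}} and the modular weak-type bound |{x : |Sf(x)| > λ}| ≤ A₂ ∫ (|f|/λ) log^ϱ(e+|f|/λ) dx for all λ > 0. Then for any two cubes Q₁, Q₂ ⊂ ℝⁿ, ∫_{Q₁} |S(fχ_{Q₂})(x)| log^β(e + |S(fχ_{Q₂})(x)|) dx ≤ C (|Q₁| + (A₁^{p₀} + A₂) ∫_{Q₂} |f(x)| log^{β+ϱ+1}(e + |f(x)|) dx), with C depending only on n, p₀, β, ϱ. -/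

import Mathlib

open MeasureTheory Set
open scoped ENNReal

namespace Stmt10

noncomputable def LL (t : ℝ) : ℝ := Real.log (Real.exp 1 + t)

noncomputable def Phi (β t : ℝ) : ℝ := t * LL t ^ β

lemma exp_one_ge_two : (2:ℝ) ≤ Real.exp 1 := by
  have := Real.add_one_le_exp 1
  linarith

lemma LL_one_le {t : ℝ} (ht : 0 ≤ t) : 1 ≤ LL t := by
  have h2 : (0:ℝ) < Real.exp 1 := Real.exp_pos 1
  have : Real.exp 1 ≤ Real.exp 1 + t := by linarith
  calc (1:ℝ) = Real.log (Real.exp 1) := (Real.log_exp 1).symm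
    _ ≤ LL t := Real.log_le_log (by positivity) this

lemma LL_nonneg {t : ℝ} (ht : 0 ≤ t) : 0 ≤ LL t := le_trans zero_le_one (LL_one_le ht)

lemma LL_mono {t s : ℝ} (ht : 0 ≤ t) (hts : t ≤ s) : LL t ≤ LL s := by
  have h2 : (0:ℝ) < Real.exp 1 := Real.exp_pos 1
  exact Real.log_le_log (by positivity) (by linarith)

lemma LL_two_mul {t : ℝ} (ht : 0 ≤ t) : LL (2 * t) ≤ 2 * LL t := by
  have h2 : (2:ℝ) ≤ Real.exp 1 := exp_one_ge_two
  have key : Real.exp 1 + 2 * t ≤ (Real.exp 1 + t) ^ 2 := by nlinarith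
  calc LL (2 * t) ≤ Real.log ((Real.exp 1 + t) ^ 2) := by
        refine Real.log_le_log (by positivity) key
    _ = 2 * LL t := by rw [Real.log_pow]; norm_num [LL]

lemma Phi_nonneg {β t : ℝ} (hβ : 0 ≤ β) (ht : 0 ≤ t) : 0 ≤ Phi β t :=
  mul_nonneg ht (Real.rpow_nonneg (LL_nonneg ht) β)

lemma Phi_mono {β t s : ℝ} (hβ : 0 ≤ β) (ht : 0 ≤ t) (hts : t ≤ s) : Phi β t ≤ Phi β s := by
  have hs : 0 ≤ s := le_trans ht hts
  exact mul_le_mul hts (Real.rpow_le_rpow (LL_nonneg ht) (LL_mono ht hts) hβ)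
    (Real.rpow_nonneg (LL_nonneg ht) β) hs

lemma log_two_le_one : Real.log 2 ≤ 1 := by
  have := Real.log_le_sub_one_of_pos (by norm_num : (0:ℝ) < 2)
  linarith

/-- `LL (2^{k+1}) ≤ 2 (k+1)` -/
lemma LL_pow_le (k : ℕ) : LL ((2:ℝ) ^ (k + 1)) ≤ 2 * (k + 1) := by
  have h2 : (2:ℝ) ≤ Real.exp 1 := exp_one_ge_two
  have hM : (2:ℝ) ≤ 2 ^ (k+1) := by
    calc (2:ℝ) = 2 ^ 1 := (pow_one 2).symm
      _ ≤ 2 ^ (k+1) := pow_le_pow_right₀ (by norm_num) (by omega)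
  have key : Real.exp 1 + 2 ^ (k+1) ≤ Real.exp 1 * 2 ^ (k+1) := by nlinarith
  calc LL ((2:ℝ) ^ (k+1)) ≤ Real.log (Real.exp 1 * 2 ^ (k+1)) :=
        Real.log_le_log (by positivity) key
    _ = 1 + (k+1) * Real.log 2 := by
        rw [Real.log_mul (by positivity) (by positivity), Real.log_exp, Real.log_pow]
        push_cast; ring
    _ ≤ 2 * (k+1) := by
        have hl : Real.log 2 ≤ 1 := log_two_le_one
        have hk : (1:ℝ) ≤ (k:ℝ) + 1 := by have : (0:ℝ) ≤ (k:ℝ) := Nat.cast_nonneg k; linarith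
        nlinarith

/-- if `2^k < t` then `k+1 ≤ 3 LL t`. -/
lemma succ_le_of_pow_lt {k : ℕ} {t : ℝ} (h : (2:ℝ)^k < t) : (k:ℝ) + 1 ≤ 3 * LL t := by
  have ht1 : (1:ℝ) ≤ t := le_of_lt (lt_of_le_of_lt (one_le_pow₀ (by norm_num)) h)
  have ht0 : (0:ℝ) < t := by linarith
  have hlog : (k:ℝ) * Real.log 2 ≤ Real.log t := by
    calc (k:ℝ) * Real.log 2 = Real.log ((2:ℝ)^k) := by rw [Real.log_pow]
      _ ≤ Real.log t := Real.log_le_log (by positivity) h.le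
  have hlt : Real.log t ≤ LL t := Real.log_le_log ht0 (by have := (Real.exp_pos 1).le; linarith)
  have hl2 : (0.6931471803 : ℝ) < Real.log 2 := Real.log_two_gt_d9
  have hL1 : 1 ≤ LL t := LL_one_le ht0.le
  nlinarith


section Sums

variable {β p₀ : ℝ}

lemma summable_aux (hβ : 0 ≤ β) {r : ℝ} (hr0 : 0 < r) (hr1 : r < 1) :
    Summable (fun j : ℕ => ((j:ℝ)+1) ^ β * r ^ j) := by
  set m := ⌈β⌉₊ with hm
  have hsum0 : Summable (fun j : ℕ => ((j:ℝ)) ^ m * r ^ j) := by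
    have : ‖r‖ < 1 := by rw [Real.norm_eq_abs, abs_of_pos hr0]; exact hr1
    exact summable_pow_mul_geometric_of_norm_lt_one m this
  have hsum1 : Summable (fun j : ℕ => ((j:ℝ)+1) ^ m * r ^ (j+1)) := by
    have := (summable_nat_add_iff 1).2 hsum0
    refine this.congr fun j => ?_
    push_cast; ring
  have hsum2 : Summable (fun j : ℕ => ((j:ℝ)+1) ^ m * r ^ j) := by
    have := hsum1.mul_left r⁻¹
    refine this.congr fun j => ?_
    field_simp [pow_succ]
    ring
  refine Summable.of_nonneg_of_le (fun j => ?_) (fun j => ?_) hsum2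
  · positivity
  · have h1 : (1:ℝ) ≤ (j:ℝ)+1 := by have : (0:ℝ) ≤ (j:ℝ) := Nat.cast_nonneg j; linarith
    have : ((j:ℝ)+1) ^ β ≤ ((j:ℝ)+1) ^ (m:ℝ) :=
      Real.rpow_le_rpow_of_exponent_le h1 (Nat.le_ceil β)
    rw [Real.rpow_natCast] at this
    exact mul_le_mul_of_nonneg_right this (by positivity)

/-- tail bound for the series `∑ (k+1)^β r^k`. -/
lemma sum_tail_bound (hβ : 0 ≤ β) {r : ℝ} (hr0 : 0 < r) (hr1 : r < 1) :
    ∃ Cβ : ℝ, 0 < Cβ ∧ ∀ (F : Finset ℕ) (k₁ : ℕ),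
      (∑ k ∈ F, (if k₁ ≤ k then ((k:ℝ)+1) ^ β * r ^ k else 0))
        ≤ Cβ * (((k₁:ℝ)+1) ^ β * r ^ k₁) := by
  have hsum := summable_aux hβ hr0 hr1
  set T : ℝ := ∑' j : ℕ, ((j:ℝ)+1) ^ β * r ^ j with hT
  refine ⟨T + 1, ?_, ?_⟩
  · have hT0 : 0 ≤ T := tsum_nonneg (fun j => by positivity)
    linarith
  intro F k₁
  rw [← Finset.sum_filter]
  set F' := F.filter (fun k => k₁ ≤ k) with hF'
  have step1 : ∑ k ∈ F', ((k:ℝ)+1) ^ β * r ^ k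
      ≤ ∑ k ∈ F', (((k₁:ℝ)+1) ^ β * r ^ k₁) * (((k - k₁ : ℕ):ℝ)+1) ^ β * r ^ (k - k₁) := by
    refine Finset.sum_le_sum fun k hk => ?_
    have hk₁ : k₁ ≤ k := (Finset.mem_filter.1 hk).2
    have hdecomp : k = k₁ + (k - k₁) := by omega
    set j := k - k₁ with hj
    have hbase : ((k:ℝ)+1) ≤ ((k₁:ℝ)+1) * ((j:ℝ)+1) := by
      have : (k:ℝ) = (k₁:ℝ) + (j:ℝ) := by rw [hdecomp]; push_cast; ring
      rw [this]
      have h1 : (0:ℝ) ≤ (k₁:ℝ) := Nat.cast_nonneg _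
      have h2 : (0:ℝ) ≤ (j:ℝ) := Nat.cast_nonneg _
      nlinarith
    have hrp : ((k:ℝ)+1) ^ β ≤ (((k₁:ℝ)+1) ^ β) * (((j:ℝ)+1) ^ β) := by
      have h0 : (0:ℝ) ≤ (k:ℝ)+1 := by positivity
      calc ((k:ℝ)+1) ^ β ≤ (((k₁:ℝ)+1) * ((j:ℝ)+1)) ^ β :=
            Real.rpow_le_rpow h0 hbase hβ
        _ = (((k₁:ℝ)+1) ^ β) * (((j:ℝ)+1) ^ β) :=
            Real.mul_rpow (by positivity) (by positivity)
    have hpow : r ^ k = r ^ k₁ * r ^ j := by rw [hdecomp, pow_add]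
    calc ((k:ℝ)+1) ^ β * r ^ k = ((k:ℝ)+1) ^ β * (r ^ k₁ * r ^ j) := by rw [hpow]
      _ ≤ ((((k₁:ℝ)+1) ^ β) * (((j:ℝ)+1) ^ β)) * (r ^ k₁ * r ^ j) := by
          refine mul_le_mul_of_nonneg_right hrp (by positivity)
      _ = (((k₁:ℝ)+1) ^ β * r ^ k₁) * (((j:ℝ)+1) ^ β) * r ^ j := by ring
  have step2 : ∑ k ∈ F', (((k₁:ℝ)+1) ^ β * r ^ k₁) * (((k - k₁ : ℕ):ℝ)+1) ^ β * r ^ (k - k₁)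
      ≤ (((k₁:ℝ)+1) ^ β * r ^ k₁) * T := by
    have : ∑ k ∈ F', (((k₁:ℝ)+1) ^ β * r ^ k₁) * (((k - k₁ : ℕ):ℝ)+1) ^ β * r ^ (k - k₁)
        = (((k₁:ℝ)+1) ^ β * r ^ k₁) * ∑ k ∈ F', (((k - k₁ : ℕ):ℝ)+1) ^ β * r ^ (k - k₁) := by
      rw [Finset.mul_sum]; refine Finset.sum_congr rfl fun k _ => by ring
    rw [this]
    refine mul_le_mul_of_nonneg_left ?_ (by positivity)
    have himg : ∑ k ∈ F', (((k - k₁ : ℕ):ℝ)+1) ^ β * r ^ (k - k₁)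
        = ∑ j ∈ F'.image (fun k => k - k₁), (((j:ℕ):ℝ)+1) ^ β * r ^ j := by
      rw [Finset.sum_image]
      intro a ha b hb hab
      have ha' : k₁ ≤ a := (Finset.mem_filter.1 ha).2
      have hb' : k₁ ≤ b := (Finset.mem_filter.1 hb).2
      simp only at hab
      omega
    rw [himg]
    exact Summable.sum_le_tsum _ (fun j _ => by positivity) hsum
  calc ∑ k ∈ F', ((k:ℝ)+1) ^ β * r ^ k
      ≤ (((k₁:ℝ)+1) ^ β * r ^ k₁) * T := le_trans step1 step2
    _ ≤ (T+1) * (((k₁:ℝ)+1) ^ β * r ^ k₁) := by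
        have hT0 : 0 ≤ T := tsum_nonneg (fun j => by positivity)
        have h0 : (0:ℝ) ≤ ((k₁:ℝ)+1) ^ β * r ^ k₁ := by positivity
        nlinarith

end Sums


section Master

variable {β ϱ p₀ : ℝ}

noncomputable def ck (β : ℝ) (k : ℕ) : ℝ := Phi β ((2:ℝ) ^ (k+1))
noncomputable def ak (k : ℕ) : ℝ := (2:ℝ) ^ k / 2
noncomputable def wk (ϱ : ℝ) (k : ℕ) (t : ℝ) : ℝ :=
  if (2:ℝ)^k < t then (t / ak k) * LL (t / ak k) ^ ϱ else 0
noncomputable def sk (p₀ : ℝ) (k : ℕ) (t : ℝ) : ℝ :=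
  if t ≤ (2:ℝ)^k then t ^ p₀ else 0

lemma ak_pos (k : ℕ) : 0 < ak k := by unfold ak; positivity

lemma one_le_two_pow (k : ℕ) : (1:ℝ) ≤ 2 ^ k := one_le_pow₀ (by norm_num)

lemma ck_nonneg (hβ : 0 ≤ β) (k : ℕ) : 0 ≤ ck β k := Phi_nonneg hβ (by positivity)

lemma ck_le (hβ : 0 ≤ β) (k : ℕ) : ck β k ≤ 2 ^ (k+1) * (2*((k:ℝ)+1)) ^ β := by
  unfold ck Phi
  refine mul_le_mul_of_nonneg_left ?_ (by positivity)
  refine Real.rpow_le_rpow (LL_nonneg (by positivity)) (LL_pow_le k) hβ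

lemma wk_nonneg (hϱ : 0 ≤ ϱ) (k : ℕ) {t : ℝ} (ht : 0 ≤ t) : 0 ≤ wk ϱ k t := by
  unfold wk
  split
  · have := ak_pos k
    have h0 : 0 ≤ t / ak k := by positivity
    exact mul_nonneg h0 (Real.rpow_nonneg (LL_nonneg h0) ϱ)
  · exact le_rfl

lemma sk_nonneg (hp₀ : 1 < p₀) (k : ℕ) {t : ℝ} (ht : 0 ≤ t) : 0 ≤ sk p₀ k t := by
  unfold sk
  split
  · exact Real.rpow_nonneg ht p₀
  · exact le_rfl

lemma weak_master (hβ : 0 ≤ β) (hϱ : 0 ≤ ϱ) :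
    ∃ Cw : ℝ, 0 < Cw ∧ ∀ t : ℝ, 0 ≤ t → ∀ F : Finset ℕ,
      ∑ k ∈ F, ck β k * wk ϱ k t ≤ Cw * Phi (β+ϱ+1) t := by
  refine ⟨12 * 2 ^ ϱ * 6 ^ β, by positivity, ?_⟩
  intro t ht F
  have hsum : ∑ k ∈ F, ck β k * wk ϱ k t
      = ∑ k ∈ F.filter (fun k => (2:ℝ)^k < t),
          ck β k * ((t / ak k) * LL (t / ak k) ^ ϱ) := by
    rw [Finset.sum_filter]
    refine Finset.sum_congr rfl fun k _ => ?_
    unfold wk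
    split <;> simp
  rw [hsum]
  set LT := LL t with hLT
  have hLT1 : 1 ≤ LT := LL_one_le ht
  have hLT0 : 0 < LT := lt_of_lt_of_le one_pos hLT1
  have hM : ∀ k ∈ F.filter (fun k => (2:ℝ)^k < t),
      ck β k * ((t / ak k) * LL (t / ak k) ^ ϱ)
        ≤ 4 * 2 ^ ϱ * 6 ^ β * (t * LT ^ (β+ϱ)) := by
    intro k hk
    have hcond : (2:ℝ)^k < t := by
      simpa using (Finset.mem_filter.1 hk).2
    have hk3 : (k:ℝ) + 1 ≤ 3 * LT := succ_le_of_pow_lt hcond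
    have ht1 : (1:ℝ) ≤ t := le_of_lt (lt_of_le_of_lt (one_le_two_pow k) hcond)
    have hak := ak_pos k
    have h2k : (1:ℝ) ≤ 2^k := one_le_two_pow k
    have hta : t / ak k ≤ 2 * t := by
      rw [div_le_iff₀ hak]
      unfold ak
      nlinarith
    have hta0 : 0 ≤ t / ak k := by positivity
    have hLL2 : LL (t / ak k) ≤ 2 * LT := by
      calc LL (t / ak k) ≤ LL (2 * t) := LL_mono hta0 hta
        _ ≤ 2 * LT := LL_two_mul ht
    have hLLp : LL (t / ak k) ^ ϱ ≤ (2:ℝ) ^ ϱ * LT ^ ϱ := by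
      calc LL (t / ak k) ^ ϱ ≤ (2 * LT) ^ ϱ :=
            Real.rpow_le_rpow (LL_nonneg hta0) hLL2 hϱ
        _ = (2:ℝ) ^ ϱ * LT ^ ϱ := Real.mul_rpow (by norm_num) hLT0.le
    have hckb : ck β k ≤ 2 ^ (k+1) * (6 * LT) ^ β := by
      refine le_trans (ck_le hβ k) ?_
      refine mul_le_mul_of_nonneg_left ?_ (by positivity)
      refine Real.rpow_le_rpow (by positivity) (by nlinarith) hβ
    have h6 : (6 * LT) ^ β = 6 ^ β * LT ^ β := Real.mul_rpow (by norm_num) hLT0.le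
    have hwterm : (t / ak k) * LL (t / ak k) ^ ϱ ≤ (2 * t / 2^k) * ((2:ℝ) ^ ϱ * LT ^ ϱ) := by
      have h1 : t / ak k = 2 * t / 2^k := by unfold ak; field_simp
      rw [← h1]
      refine mul_le_mul_of_nonneg_left hLLp hta0
    calc ck β k * ((t / ak k) * LL (t / ak k) ^ ϱ)
        ≤ (2 ^ (k+1) * (6 * LT) ^ β) * ((2 * t / 2^k) * ((2:ℝ) ^ ϱ * LT ^ ϱ)) := by
          refine mul_le_mul hckb hwterm ?_ (by positivity)
          exact mul_nonneg hta0 (Real.rpow_nonneg (LL_nonneg hta0) ϱ)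
      _ = 4 * 2 ^ ϱ * (6 ^ β * (LT ^ β * LT ^ ϱ)) * t := by
          rw [h6]
          have h2k0 : (2:ℝ)^k ≠ 0 := by positivity
          field_simp [pow_succ]
          ring
      _ = 4 * 2 ^ ϱ * 6 ^ β * (t * LT ^ (β+ϱ)) := by
          rw [← Real.rpow_add hLT0]
          ring
  have hcard : (F.filter (fun k => (2:ℝ)^k < t)).card ≤ 3 * LT := by
    have hsub : F.filter (fun k => (2:ℝ)^k < t) ⊆ Finset.range (Nat.floor (3*LT)) := by
      intro k hk
      have hcond : (2:ℝ)^k < t := by simpa using (Finset.mem_filter.1 hk).2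
      have hk3 : (k:ℝ) + 1 ≤ 3 * LT := succ_le_of_pow_lt hcond
      have : (k+1 : ℕ) ≤ Nat.floor (3*LT) := Nat.le_floor (by push_cast; linarith)
      exact Finset.mem_range.2 (by omega)
    calc ((F.filter (fun k => (2:ℝ)^k < t)).card : ℝ)
        ≤ ((Finset.range (Nat.floor (3*LT))).card : ℝ) := by
          exact_mod_cast Nat.cast_le.2 (Finset.card_le_card hsub)
      _ = (Nat.floor (3*LT) : ℝ) := by rw [Finset.card_range]
      _ ≤ 3 * LT := Nat.floor_le (by positivity)
  calc ∑ k ∈ F.filter (fun k => (2:ℝ)^k < t), ck β k * ((t / ak k) * LL (t / ak k) ^ ϱ)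
      ≤ (F.filter (fun k => (2:ℝ)^k < t)).card • (4 * 2 ^ ϱ * 6 ^ β * (t * LT ^ (β+ϱ))) :=
        Finset.sum_le_card_nsmul _ _ _ hM
    _ = ((F.filter (fun k => (2:ℝ)^k < t)).card : ℝ) * (4 * 2 ^ ϱ * 6 ^ β * (t * LT ^ (β+ϱ))) := by
        rw [nsmul_eq_mul]
    _ ≤ (3 * LT) * (4 * 2 ^ ϱ * 6 ^ β * (t * LT ^ (β+ϱ))) := by
        refine mul_le_mul_of_nonneg_right hcard (by positivity)
    _ = 12 * 2 ^ ϱ * 6 ^ β * (t * (LT ^ (β+ϱ) * LT ^ (1:ℝ))) := by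
        rw [Real.rpow_one]; ring
    _ = 12 * 2 ^ ϱ * 6 ^ β * Phi (β+ϱ+1) t := by
        rw [← Real.rpow_add hLT0]
        unfold Phi
        norm_num [hLT]

end Master


section Strong

variable {β ϱ p₀ : ℝ}

lemma rk_eq (p₀ : ℝ) (k : ℕ) : ((2:ℝ) ^ ((1:ℝ)-p₀)) ^ k = ((2:ℝ) ^ k) ^ ((1:ℝ)-p₀) := by
  rw [← Real.rpow_natCast ((2:ℝ) ^ ((1:ℝ)-p₀)) k, ← Real.rpow_mul (by norm_num : (0:ℝ) ≤ 2),
    ← Real.rpow_natCast (2:ℝ) k, ← Real.rpow_mul (by norm_num : (0:ℝ) ≤ 2), mul_comm]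

lemma coeff_bound (hβ : 0 ≤ β) (hp₀ : 1 < p₀) (k : ℕ) :
    ck β k * ((ak k ^ p₀)⁻¹) ≤ (2 * 2 ^ β * 2 ^ p₀) * (((k:ℝ)+1) ^ β * ((2:ℝ) ^ ((1:ℝ)-p₀)) ^ k) := by
  have h2k : (0:ℝ) < 2 ^ k := by positivity
  have hak := ak_pos k
  have hinv : (ak k ^ p₀)⁻¹ = 2 ^ p₀ * ((2:ℝ)^k) ^ (-p₀) := by
    unfold ak
    rw [Real.div_rpow h2k.le (by norm_num : (0:ℝ) ≤ 2)]
    rw [inv_div, Real.rpow_neg h2k.le, div_eq_mul_inv]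
  have hck : ck β k ≤ (2 * 2 ^ β) * (((k:ℝ)+1) ^ β * 2 ^ k) := by
    refine le_trans (ck_le hβ k) ?_
    have : (2*((k:ℝ)+1)) ^ β = 2 ^ β * ((k:ℝ)+1) ^ β := by
      refine Real.mul_rpow (by norm_num) (by positivity)
    rw [this, pow_succ]
    ring_nf
    exact le_rfl
  have hr : ((2:ℝ) ^ ((1:ℝ)-p₀)) ^ k = 2^k * ((2:ℝ)^k) ^ (-p₀) := by
    rw [rk_eq]
    rw [show (1:ℝ) - p₀ = 1 + (-p₀) by ring, Real.rpow_add h2k, Real.rpow_one]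
  have hpos : (0:ℝ) < ((2:ℝ)^k) ^ (-p₀) := Real.rpow_pos_of_pos h2k _
  calc ck β k * ((ak k ^ p₀)⁻¹)
      ≤ ((2 * 2 ^ β) * (((k:ℝ)+1) ^ β * 2 ^ k)) * ((ak k ^ p₀)⁻¹) := by
        refine mul_le_mul_of_nonneg_right hck (by positivity)
    _ = (2 * 2 ^ β * 2 ^ p₀) * (((k:ℝ)+1) ^ β * (2^k * ((2:ℝ)^k) ^ (-p₀))) := by
        rw [hinv]; ring
    _ = (2 * 2 ^ β * 2 ^ p₀) * (((k:ℝ)+1) ^ β * ((2:ℝ) ^ ((1:ℝ)-p₀)) ^ k) := by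
        rw [hr]

lemma strong_master (hβ : 0 ≤ β) (hp₀ : 1 < p₀) :
    ∃ Cs : ℝ, 0 < Cs ∧ ∀ t : ℝ, 0 ≤ t → ∀ F : Finset ℕ,
      ∑ k ∈ F, (ck β k * ((ak k ^ p₀)⁻¹)) * sk p₀ k t ≤ Cs * Phi β t := by
  set r : ℝ := (2:ℝ) ^ ((1:ℝ)-p₀) with hrdef
  have hr0 : 0 < r := Real.rpow_pos_of_pos (by norm_num) _
  have hr1 : r < 1 := by
    refine Real.rpow_lt_one_of_one_lt_of_neg (by norm_num) (by linarith)
  obtain ⟨Cβ, hCβ0, hCβ⟩ := sum_tail_bound hβ hr0 hr1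
  set c0 : ℝ := 2 * 2 ^ β * 2 ^ p₀ with hc0
  have hc00 : 0 < c0 := by positivity
  refine ⟨c0 * Cβ * (3 ^ β * 2 ^ (p₀ - 1) + 1), by positivity, ?_⟩
  intro t ht F
  have hp₀0 : (0:ℝ) < p₀ := by linarith
  -- termwise bound by the tail series
  rcases eq_or_lt_of_le ht with h0 | ht0
  · -- t = 0
    have : ∀ k ∈ F, (ck β k * ((ak k ^ p₀)⁻¹)) * sk p₀ k t = 0 := by
      intro k _
      unfold sk
      rw [← h0]
      simp [Real.zero_rpow (ne_of_gt hp₀0)]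
    rw [Finset.sum_congr rfl this]
    rw [Finset.sum_const, smul_zero]
    have : Phi β t = 0 := by rw [← h0]; unfold Phi; ring
    rw [this, mul_zero]
  have hLT1 : 1 ≤ LL t := LL_one_le ht
  have hLT0 : 0 < LL t := lt_of_lt_of_le one_pos hLT1
  have hLLb : (1:ℝ) ≤ LL t ^ β := by
    calc (1:ℝ) = 1 ^ β := (Real.one_rpow β).symm
      _ ≤ LL t ^ β := Real.rpow_le_rpow (by norm_num) hLT1 hβ
  rcases le_or_gt t 1 with ht1 | ht1
  · -- case t ≤ 1
    have hterm : ∀ k ∈ F, (ck β k * ((ak k ^ p₀)⁻¹)) * sk p₀ k t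
        ≤ (if 0 ≤ k then (((k:ℝ)+1) ^ β * r ^ k) else 0) * (c0 * t) := by
      intro k _
      simp only [Nat.zero_le, if_true]
      unfold sk
      split
      · have h1 : t ^ p₀ ≤ t := by
          calc t ^ p₀ ≤ t ^ (1:ℝ) := Real.rpow_le_rpow_of_exponent_ge ht0 ht1 (by linarith)
            _ = t := Real.rpow_one t
        calc (ck β k * ((ak k ^ p₀)⁻¹)) * t ^ p₀
            ≤ (c0 * (((k:ℝ)+1) ^ β * r ^ k)) * t ^ p₀ := by
              refine mul_le_mul_of_nonneg_right (coeff_bound hβ hp₀ k) (Real.rpow_nonneg ht p₀)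
          _ ≤ (c0 * (((k:ℝ)+1) ^ β * r ^ k)) * t := by
              refine mul_le_mul_of_nonneg_left h1 (by positivity)
          _ = (((k:ℝ)+1) ^ β * r ^ k) * (c0 * t) := by ring
      · have : (0:ℝ) ≤ (((k:ℝ)+1) ^ β * r ^ k) * (c0 * t) := by positivity
        simpa using this
    calc ∑ k ∈ F, (ck β k * ((ak k ^ p₀)⁻¹)) * sk p₀ k t
        ≤ ∑ k ∈ F, (if 0 ≤ k then (((k:ℝ)+1) ^ β * r ^ k) else 0) * (c0 * t) :=
          Finset.sum_le_sum hterm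
      _ = (∑ k ∈ F, (if (0:ℕ) ≤ k then (((k:ℝ)+1) ^ β * r ^ k) else 0)) * (c0 * t) := by
          rw [Finset.sum_mul]
      _ ≤ (Cβ * ((((0:ℕ):ℝ)+1) ^ β * r ^ (0:ℕ))) * (c0 * t) := by
          refine mul_le_mul_of_nonneg_right (hCβ F 0) (by positivity)
      _ = Cβ * c0 * t := by
          norm_num [Real.one_rpow]
          ring
      _ ≤ c0 * Cβ * (3 ^ β * 2 ^ (p₀ - 1) + 1) * Phi β t := by
          unfold Phi
          have h1 : (1:ℝ) ≤ 3 ^ β * 2 ^ (p₀ - 1) + 1 := by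
            have : (0:ℝ) < 3 ^ β * 2 ^ (p₀-1) := by positivity
            linarith
          have h2 : t ≤ t * LL t ^ β := by nlinarith [mul_nonneg ht0.le (sub_nonneg.2 hLLb)]
          calc Cβ * c0 * t ≤ Cβ * c0 * (t * LL t ^ β) := by
                refine mul_le_mul_of_nonneg_left h2 (by positivity)
            _ ≤ c0 * Cβ * (3 ^ β * 2 ^ (p₀ - 1) + 1) * (t * LL t ^ β) := by
                have h3 : (0:ℝ) ≤ t * LL t ^ β := by positivity
                have h4 : (0:ℝ) ≤ c0 * Cβ * (3 ^ β * 2 ^ (p₀ - 1)) * (t * LL t ^ β) := by positivity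
                nlinarith
  · -- case 1 < t
    set k₁ : ℕ := Nat.floor (Real.logb 2 t) with hk₁def
    have hlogb0 : 0 ≤ Real.logb 2 t := Real.logb_nonneg (by norm_num) ht1.le
    have hterm : ∀ k ∈ F, (ck β k * ((ak k ^ p₀)⁻¹)) * sk p₀ k t
        ≤ (if k₁ ≤ k then (((k:ℝ)+1) ^ β * r ^ k) else 0) * (c0 * t ^ p₀) := by
      intro k _
      unfold sk
      split
      · rename_i hcond
        have hk₁le : k₁ ≤ k := by
          have h1 : Real.logb 2 t ≤ (k:ℝ) := by
            rw [Real.logb_le_iff_le_rpow (by norm_num) ht0]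
            rw [Real.rpow_natCast]
            exact hcond
          calc k₁ ≤ Nat.floor ((k:ℝ)) := Nat.floor_mono h1
            _ = k := Nat.floor_natCast k
        rw [if_pos hk₁le]
        calc (ck β k * ((ak k ^ p₀)⁻¹)) * t ^ p₀
            ≤ (c0 * (((k:ℝ)+1) ^ β * r ^ k)) * t ^ p₀ := by
              refine mul_le_mul_of_nonneg_right (coeff_bound hβ hp₀ k) (Real.rpow_nonneg ht p₀)
          _ = (((k:ℝ)+1) ^ β * r ^ k) * (c0 * t ^ p₀) := by ring
      · rw [mul_zero]
        split
        · positivity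
        · simp
    have hkey : ∑ k ∈ F, (ck β k * ((ak k ^ p₀)⁻¹)) * sk p₀ k t
        ≤ (Cβ * ((((k₁:ℕ):ℝ)+1) ^ β * r ^ k₁)) * (c0 * t ^ p₀) := by
      calc ∑ k ∈ F, (ck β k * ((ak k ^ p₀)⁻¹)) * sk p₀ k t
          ≤ ∑ k ∈ F, (if k₁ ≤ k then (((k:ℝ)+1) ^ β * r ^ k) else 0) * (c0 * t ^ p₀) :=
            Finset.sum_le_sum hterm
        _ = (∑ k ∈ F, (if k₁ ≤ k then (((k:ℝ)+1) ^ β * r ^ k) else 0)) * (c0 * t ^ p₀) := by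
            rw [Finset.sum_mul]
        _ ≤ (Cβ * ((((k₁:ℕ):ℝ)+1) ^ β * r ^ k₁)) * (c0 * t ^ p₀) := by
            refine mul_le_mul_of_nonneg_right (hCβ F k₁) (by positivity)
    -- bounds on k₁
    have hfl : (k₁:ℝ) ≤ Real.logb 2 t := Nat.floor_le hlogb0
    have hlt : Real.log t ≤ LL t := Real.log_le_log ht0 (by have := (Real.exp_pos 1).le; linarith)
    have hlogt0 : 0 ≤ Real.log t := Real.log_nonneg ht1.le
    have hl2 : (0.6931471803 : ℝ) < Real.log 2 := Real.log_two_gt_d9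
    have hlogb_eq : Real.logb 2 t = Real.log t / Real.log 2 := rfl
    have hk₁3 : ((k₁:ℝ)+1) ≤ 3 * LL t := by
      have h1 : Real.logb 2 t ≤ 2 * Real.log t := by
        rw [hlogb_eq, div_le_iff₀ (by linarith)]
        nlinarith
      nlinarith
    have hk₁b : ((k₁:ℝ)+1) ^ β ≤ (3:ℝ) ^ β * LL t ^ β := by
      calc ((k₁:ℝ)+1) ^ β ≤ (3 * LL t) ^ β :=
            Real.rpow_le_rpow (by positivity) hk₁3 hβ
        _ = (3:ℝ) ^ β * LL t ^ β := Real.mul_rpow (by norm_num) hLT0.le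
    have htk : t ≤ 2 * 2 ^ k₁ := by
      have h1 : Real.logb 2 t < (k₁:ℝ) + 1 := Nat.lt_floor_add_one _
      have h2 : t = (2:ℝ) ^ (Real.logb 2 t) := (Real.rpow_logb (by norm_num) (by norm_num) ht0).symm
      calc t = (2:ℝ) ^ (Real.logb 2 t) := h2
        _ ≤ (2:ℝ) ^ ((k₁:ℝ)+1) := Real.rpow_le_rpow_of_exponent_le (by norm_num) h1.le
        _ = 2 * 2 ^ k₁ := by
            rw [show ((k₁:ℝ)+1) = ((k₁+1:ℕ):ℝ) by push_cast; ring, Real.rpow_natCast, pow_succ]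
            ring
    have hrk : r ^ k₁ * t ^ p₀ ≤ 2 ^ (p₀-1) * t := by
      have h2k : (0:ℝ) < 2 ^ k₁ := by positivity
      have ht2 : 0 < t/2 := by linarith
      have h1 : t/2 ≤ 2 ^ k₁ := by linarith
      have h2 : r ^ k₁ ≤ (t/2) ^ ((1:ℝ)-p₀) := by
        rw [rk_eq]
        exact Real.rpow_le_rpow_of_nonpos ht2 h1 (by linarith)
      have h3 : (t/2) ^ ((1:ℝ)-p₀) * t ^ p₀ = 2 ^ (p₀-1) * t := by
        rw [Real.div_rpow ht (by norm_num : (0:ℝ) ≤ 2)]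
        rw [div_mul_eq_mul_div, ← Real.rpow_add ht0, sub_add_cancel, Real.rpow_one]
        rw [show (p₀ - 1) = -((1:ℝ)-p₀) by ring, Real.rpow_neg (by norm_num : (0:ℝ) ≤ 2)]
        field_simp
      calc r ^ k₁ * t ^ p₀ ≤ (t/2) ^ ((1:ℝ)-p₀) * t ^ p₀ := by
            refine mul_le_mul_of_nonneg_right h2 (Real.rpow_nonneg ht p₀)
        _ = 2 ^ (p₀-1) * t := h3
    calc ∑ k ∈ F, (ck β k * ((ak k ^ p₀)⁻¹)) * sk p₀ k t
        ≤ (Cβ * ((((k₁:ℕ):ℝ)+1) ^ β * r ^ k₁)) * (c0 * t ^ p₀) := hkey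
      _ = (Cβ * c0) * (((k₁:ℝ)+1) ^ β) * (r ^ k₁ * t ^ p₀) := by ring
      _ ≤ (Cβ * c0) * ((3:ℝ) ^ β * LL t ^ β) * (2 ^ (p₀-1) * t) := by
          refine mul_le_mul ?_ hrk (by positivity) (by positivity)
          refine mul_le_mul_of_nonneg_left hk₁b (by positivity)
      _ = c0 * Cβ * (3 ^ β * 2 ^ (p₀ - 1)) * (t * LL t ^ β) := by ring
      _ ≤ c0 * Cβ * (3 ^ β * 2 ^ (p₀ - 1) + 1) * Phi β t := by
          unfold Phi
          have h4 : (0:ℝ) ≤ t * LL t ^ β := by positivity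
          nlinarith [mul_pos hc00 hCβ0]

end Strong


section Combined

variable {β ϱ p₀ : ℝ}

lemma master (hβ : 0 ≤ β) (hϱ : 0 ≤ ϱ) (hp₀ : 1 < p₀) (A₁ A₂ : ℝ)
    (hA₁ : 0 ≤ A₁) (hA₂ : 0 ≤ A₂) :
    ∃ C₂ : ℝ, 0 < C₂ ∧ ∀ t : ℝ, 0 ≤ t → ∀ F : Finset ℕ,
      ∑ k ∈ F, (A₂ * ck β k * wk ϱ k t
          + (A₁ ^ p₀ * ck β k * ((ak k ^ p₀)⁻¹)) * sk p₀ k t)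
        ≤ C₂ * Phi (β+ϱ+1) t := by
  obtain ⟨Cw, hCw0, hCw⟩ := weak_master hβ hϱ
  obtain ⟨Cs, hCs0, hCs⟩ := strong_master hβ hp₀
  have hA₁p : 0 ≤ A₁ ^ p₀ := Real.rpow_nonneg hA₁ p₀
  refine ⟨A₂ * Cw + A₁ ^ p₀ * Cs + 1, by positivity, ?_⟩
  intro t ht F
  have hLT1 : 1 ≤ LL t := LL_one_le ht
  have hLT0 : 0 < LL t := lt_of_lt_of_le one_pos hLT1
  have hPhi0 : 0 ≤ Phi (β+ϱ+1) t := Phi_nonneg (by linarith) ht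
  have hsplit : ∑ k ∈ F, (A₂ * ck β k * wk ϱ k t
      + (A₁ ^ p₀ * ck β k * ((ak k ^ p₀)⁻¹)) * sk p₀ k t)
      = A₂ * ∑ k ∈ F, ck β k * wk ϱ k t
        + A₁ ^ p₀ * ∑ k ∈ F, (ck β k * ((ak k ^ p₀)⁻¹)) * sk p₀ k t := by
    rw [Finset.sum_add_distrib, Finset.mul_sum, Finset.mul_sum]
    congr 1
    · exact Finset.sum_congr rfl fun k _ => by ring
    · exact Finset.sum_congr rfl fun k _ => by ring
  rw [hsplit]
  have hw := hCw t ht F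
  have hs := hCs t ht F
  have hPhile : Phi β t ≤ Phi (β+ϱ+1) t := by
    unfold Phi
    refine mul_le_mul_of_nonneg_left ?_ ht
    exact Real.rpow_le_rpow_of_exponent_le hLT1 (by linarith)
  have h1 : A₂ * ∑ k ∈ F, ck β k * wk ϱ k t ≤ A₂ * Cw * Phi (β+ϱ+1) t := by
    rw [mul_assoc]
    exact mul_le_mul_of_nonneg_left hw hA₂
  have h2 : A₁ ^ p₀ * ∑ k ∈ F, (ck β k * ((ak k ^ p₀)⁻¹)) * sk p₀ k t
      ≤ A₁ ^ p₀ * Cs * Phi (β+ϱ+1) t := by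
    rw [mul_assoc]
    refine mul_le_mul_of_nonneg_left (le_trans hs ?_) hA₁p
    exact mul_le_mul_of_nonneg_left hPhile hCs0.le
  nlinarith

end Combined

end Stmt10

/-- Lemma 2.1 of the paper: if a sublinear operator `S` is bounded on
`L^{p₀}` with norm `A₁` and satisfies the modular weak-type bound
`|{|Sf| > λ}| ≤ A₂ ∫ (|f|/λ) log^ϱ(e+|f|/λ)`, then for any cubes `Q₁, Q₂`,
`∫_{Q₁} |S(fχ_{Q₂})| log^β(e + |S(fχ_{Q₂})|)
   ≤ C (|Q₁| + (A₁^{p₀}+A₂) ∫_{Q₂} |f| log^{β+ϱ+1}(e+|f|))`. -/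
theorem stmt_10 (n : ℕ) (p₀ β ϱ A₁ A₂ : ℝ)
    (hp₀ : 1 < p₀) (hβ : 0 ≤ β) (hϱ : 0 ≤ ϱ) (hA₁ : 0 < A₁) (hA₂ : 0 < A₂)
    (S : ((Fin n → ℝ) → ℝ) → (Fin n → ℝ) → ℝ)
    (hsub : ∀ f g : (Fin n → ℝ) → ℝ, ∀ x, |S (f + g) x| ≤ |S f x| + |S g x|)
    (hLp : ∀ f : (Fin n → ℝ) → ℝ,
      eLpNorm (S f) (ENNReal.ofReal p₀) volume
        ≤ ENNReal.ofReal A₁ * eLpNorm f (ENNReal.ofReal p₀) volume)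
    (hweak : ∀ (f : (Fin n → ℝ) → ℝ) (lam : ℝ), 0 < lam →
      volume {x | lam < |S f x|}
        ≤ ENNReal.ofReal A₂ *
          ∫⁻ x, ENNReal.ofReal
            ((|f x| / lam) * (Real.log (Real.exp 1 + |f x| / lam)) ^ ϱ)) :
    ∃ C : ℝ, 0 < C ∧
      ∀ (f : (Fin n → ℝ) → ℝ) (z₁ z₂ : Fin n → ℝ) (r₁ r₂ : ℝ), 0 < r₁ → 0 < r₂ →
        ∫⁻ x in Metric.closedBall z₁ r₁,
            ENNReal.ofReal
              (|S ((Metric.closedBall z₂ r₂).indicator f) x| *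
                (Real.log (Real.exp 1
                  + |S ((Metric.closedBall z₂ r₂).indicator f) x|)) ^ β)
          ≤ ENNReal.ofReal C *
            (volume (Metric.closedBall z₁ r₁)
              + ENNReal.ofReal (A₁ ^ p₀ + A₂) *
                ∫⁻ x in Metric.closedBall z₂ r₂,
                  ENNReal.ofReal
                    (|f x| * (Real.log (Real.exp 1 + |f x|)) ^ (β + ϱ + 1))) := by
  classical
  have hp₀0 : (0:ℝ) < p₀ := by linarith
  obtain ⟨C₂, hC₂0, hmaster⟩ := Stmt10.master hβ hϱ hp₀ A₁ A₂ hA₁.le hA₂.le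
  have hA₁p : (0:ℝ) < A₁ ^ p₀ := Real.rpow_pos_of_pos hA₁ p₀
  set sA : ℝ := A₁ ^ p₀ + A₂ with hsA
  have hsA0 : 0 < sA := by linarith
  set Φ1 : ℝ := Stmt10.Phi β 1 with hΦ1def
  have hΦ10 : 0 ≤ Φ1 := Stmt10.Phi_nonneg hβ zero_le_one
  refine ⟨Φ1 + C₂ / sA + 1, by positivity, ?_⟩
  intro f z₁ z₂ r₁ r₂ hr₁ hr₂
  set C : ℝ := Φ1 + C₂ / sA + 1 with hCdef
  have hC0 : 0 < C := by positivity
  set Q₁ := Metric.closedBall z₁ r₁ with hQ₁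
  set Q₂ := Metric.closedBall z₂ r₂ with hQ₂
  set h : (Fin n → ℝ) → ℝ := Q₂.indicator f with hh
  set g : (Fin n → ℝ) → ℝ := S h with hg
  show (∫⁻ x in Q₁, ENNReal.ofReal (Stmt10.Phi β (|g x|)))
      ≤ ENNReal.ofReal C *
        (volume Q₁ + ENNReal.ofReal sA *
          ∫⁻ x in Q₂, ENNReal.ofReal (Stmt10.Phi (β+ϱ+1) (|f x|)))
  -- the right-hand integral over Q₂ equals a global integral of h
  have hI : (∫⁻ x, ENNReal.ofReal (Stmt10.Phi (β+ϱ+1) (|h x|)) ∂volume)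
      = ∫⁻ x in Q₂, ENNReal.ofReal (Stmt10.Phi (β+ϱ+1) (|f x|)) := by
    rw [← lintegral_indicator measurableSet_closedBall]
    congr 1
    funext x
    by_cases hx : x ∈ Q₂
    · rw [Set.indicator_of_mem hx, hh, Set.indicator_of_mem hx]
    · rw [Set.indicator_of_notMem hx, hh, Set.indicator_of_notMem hx]
      simp [Stmt10.Phi]
  -- measurable minorant of the left-hand integrand
  obtain ⟨φ, hφm, hφle, hφeq⟩ := exists_measurable_le_lintegral_eq (volume.restrict Q₁)
    (fun x => ENNReal.ofReal (Stmt10.Phi β (|g x|)))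
  set D : ℕ → Set (Fin n → ℝ) :=
    fun k => {x | ENNReal.ofReal (Stmt10.Phi β ((2:ℝ)^k)) < φ x} with hD
  have hDm : ∀ k, MeasurableSet (D k) := fun k => measurableSet_lt measurable_const hφm
  have hDg : ∀ k x, x ∈ D k → (2:ℝ)^k < |g x| := by
    intro k x hx
    have h1 : ENNReal.ofReal (Stmt10.Phi β ((2:ℝ)^k))
        < ENNReal.ofReal (Stmt10.Phi β (|g x|)) := lt_of_lt_of_le hx (hφle x)
    by_contra hc
    push_neg at hc
    exact absurd h1 (not_lt.2 (ENNReal.ofReal_le_ofReal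
      (Stmt10.Phi_mono hβ (abs_nonneg _) hc)))
  have hpt : ∀ x, φ x ≤ ENNReal.ofReal Φ1
      + ∑' k, (D k).indicator (fun _ => ENNReal.ofReal (Stmt10.ck β k)) x := by
    intro x
    rcases le_or_gt (φ x) (ENNReal.ofReal Φ1) with h0 | h0
    · exact le_trans h0 le_self_add
    · obtain ⟨M, hM⟩ := pow_unbounded_of_one_lt (|g x|) (one_lt_two (α := ℝ))
      have hP0 : x ∈ D 0 := by
        show ENNReal.ofReal (Stmt10.Phi β ((2:ℝ)^(0:ℕ))) < φ x
        rw [pow_zero]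
        exact h0
      have hPM : ∀ k, x ∈ D k → k < M := by
        intro k hk
        have h1 := hDg k x hk
        have h2 : (2:ℝ)^k < 2^M := lt_trans h1 hM
        exact (pow_lt_pow_iff_right₀ (by norm_num : (1:ℝ) < 2)).1 h2
      set k0 := Nat.findGreatest (fun k => x ∈ D k) M with hk0def
      have hk0 : x ∈ D k0 := Nat.findGreatest_spec (P := fun k => x ∈ D k) (Nat.zero_le M) hP0
      have hk0M : k0 < M := hPM _ hk0
      have hnot : x ∉ D (k0+1) :=
        Nat.findGreatest_is_greatest (P := fun k => x ∈ D k) (Nat.lt_succ_self _) (by omega)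
      have hφle2 : φ x ≤ ENNReal.ofReal (Stmt10.ck β k0) := by
        have h1 : ¬ (ENNReal.ofReal (Stmt10.Phi β ((2:ℝ)^(k0+1))) < φ x) := hnot
        exact not_lt.1 h1
      calc φ x ≤ ENNReal.ofReal (Stmt10.ck β k0) := hφle2
        _ = (D k0).indicator (fun _ => ENNReal.ofReal (Stmt10.ck β k0)) x :=
            (Set.indicator_of_mem hk0 (fun _ => ENNReal.ofReal (Stmt10.ck β k0))).symm
        _ ≤ ∑' k, (D k).indicator (fun _ => ENNReal.ofReal (Stmt10.ck β k)) x :=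
            ENNReal.le_tsum k0
        _ ≤ _ := le_add_self
  have hB : (∫⁻ x in Q₁, ENNReal.ofReal (Stmt10.Phi β (|g x|)))
      ≤ ENNReal.ofReal Φ1 * volume Q₁
        + ∑' k, ENNReal.ofReal (Stmt10.ck β k) * (volume.restrict Q₁) (D k) := by
    rw [hφeq]
    calc ∫⁻ x, φ x ∂(volume.restrict Q₁)
        ≤ ∫⁻ x, (ENNReal.ofReal Φ1
            + ∑' k, (D k).indicator (fun _ => ENNReal.ofReal (Stmt10.ck β k)) x)
            ∂(volume.restrict Q₁) := lintegral_mono hpt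
      _ = ENNReal.ofReal Φ1 * volume Q₁
          + ∑' k, ENNReal.ofReal (Stmt10.ck β k) * (volume.restrict Q₁) (D k) := by
          rw [lintegral_add_left measurable_const]
          congr 1
          · rw [lintegral_const, Measure.restrict_apply_univ]
          · rw [lintegral_tsum (fun k => (measurable_const.indicator (hDm k)).aemeasurable)]
            congr 1
            funext k
            rw [lintegral_indicator_const (hDm k)]
  -- per-level estimate
  have hPne : (ENNReal.ofReal p₀) ≠ 0 := (ENNReal.ofReal_pos.2 hp₀0).ne'
  have hPtop : (ENNReal.ofReal p₀) ≠ ∞ := ENNReal.ofReal_ne_top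
  have hkeyLp : ∀ w : (Fin n → ℝ) → ℝ,
      (∫⁻ x, ((‖w x‖₊ : ℝ≥0∞)) ^ p₀ ∂volume)
        = (eLpNorm w (ENNReal.ofReal p₀) volume) ^ p₀ := by
    intro w
    rw [eLpNorm_eq_lintegral_rpow_enorm_toReal hPne hPtop, ENNReal.toReal_ofReal hp₀0.le,
      one_div, ENNReal.rpow_inv_rpow (ne_of_gt hp₀0)]
    simp only [enorm_eq_nnnorm]
  have hkC : ∀ k : ℕ, ENNReal.ofReal (Stmt10.ck β k) * (volume.restrict Q₁) (D k)
      ≤ ∫⁻ x, ENNReal.ofReal (A₂ * Stmt10.ck β k * Stmt10.wk ϱ k (|h x|)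
          + (A₁ ^ p₀ * Stmt10.ck β k * ((Stmt10.ak k ^ p₀)⁻¹)) * Stmt10.sk p₀ k (|h x|))
          ∂volume := by
    intro k
    have hak := Stmt10.ak_pos k
    have hck0 : 0 ≤ Stmt10.ck β k := Stmt10.ck_nonneg hβ k
    set u : (Fin n → ℝ) → ℝ := fun x => if |h x| ≤ (2:ℝ)^k then h x else 0 with hu
    set v : (Fin n → ℝ) → ℝ := fun x => if |h x| ≤ (2:ℝ)^k then 0 else h x with hv
    have huv : u + v = h := by
      funext x
      by_cases hc : |h x| ≤ (2:ℝ)^k <;> simp [hu, hv, hc]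
    have hsub' : ∀ x, |g x| ≤ |S u x| + |S v x| := by
      intro x
      have h1 := hsub u v x
      rw [huv, ← hg] at h1
      exact h1
    have hDsub : D k ⊆ {x | Stmt10.ak k < |S u x|} ∪ {x | Stmt10.ak k < |S v x|} := by
      intro x hx
      have h1 : (2:ℝ)^k < |g x| := hDg k x hx
      by_cases hu' : Stmt10.ak k < |S u x|
      · exact Or.inl hu'
      · refine Or.inr ?_
        show Stmt10.ak k < |S v x|
        by_contra hv'
        push_neg at hu' hv'
        have h2 := hsub' x
        have h3 : Stmt10.ak k + Stmt10.ak k = (2:ℝ)^k := by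
          unfold Stmt10.ak
          ring
        show False
        linarith
    set W := toMeasurable volume {x | Stmt10.ak k < |S v x|} with hW
    have hWm : MeasurableSet W := measurableSet_toMeasurable _ _
    have hμW : volume W ≤ ENNReal.ofReal A₂
        * ∫⁻ x, ENNReal.ofReal (Stmt10.wk ϱ k (|h x|)) ∂volume := by
      have h1 : volume W = volume {x | Stmt10.ak k < |S v x|} := measure_toMeasurable _
      have h2 := hweak v (Stmt10.ak k) hak
      have h3 : ∀ x, (|v x| / Stmt10.ak k)
          * (Real.log (Real.exp 1 + |v x| / Stmt10.ak k)) ^ ϱ = Stmt10.wk ϱ k (|h x|) := by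
        intro x
        unfold Stmt10.wk
        by_cases hc : |h x| ≤ (2:ℝ)^k
        · rw [if_neg (not_lt.2 hc)]
          simp [hv, hc, Real.log_exp, Real.one_rpow]
        · rw [if_pos (lt_of_not_ge hc)]
          simp only [hv, if_neg hc]
          rfl
      rw [h1]
      refine le_trans h2 ?_
      refine mul_le_mul_right (le_of_eq (lintegral_congr fun x => ?_)) _
      rw [h3 x]
    set E := D k \ W with hE
    have hEm : MeasurableSet (E) := (hDm k).diff hWm
    have hEsub : E ⊆ {x | Stmt10.ak k < |S u x|} := by
      intro x hx
      rcases hDsub hx.1 with h1 | h1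
      · exact h1
      · exact absurd (subset_toMeasurable volume _ h1) hx.2
    have hcheb : ENNReal.ofReal (Stmt10.ak k ^ p₀) * volume E
        ≤ ∫⁻ x, ((‖S u x‖₊ : ℝ≥0∞)) ^ p₀ ∂volume := by
      rw [← lintegral_indicator_const hEm]
      refine lintegral_mono fun x => ?_
      by_cases hx : x ∈ E
      · rw [Set.indicator_of_mem hx]
        have h1 : Stmt10.ak k < |S u x| := hEsub hx
        have h2 : Stmt10.ak k ^ p₀ ≤ |S u x| ^ p₀ :=
          Real.rpow_le_rpow hak.le h1.le hp₀0.le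
        calc ENNReal.ofReal (Stmt10.ak k ^ p₀)
            ≤ ENNReal.ofReal (|S u x| ^ p₀) := ENNReal.ofReal_le_ofReal h2
          _ = (ENNReal.ofReal (|S u x|)) ^ p₀ :=
              (ENNReal.ofReal_rpow_of_nonneg (abs_nonneg _) hp₀0.le).symm
          _ = ((‖S u x‖₊ : ℝ≥0∞)) ^ p₀ := by rw [← Real.enorm_eq_ofReal_abs, enorm_eq_nnnorm]
      · rw [Set.indicator_of_notMem hx]
        exact zero_le
    have hu_eq : ∀ x, ((‖u x‖₊ : ℝ≥0∞)) ^ p₀ = ENNReal.ofReal (Stmt10.sk p₀ k (|h x|)) := by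
      intro x
      unfold Stmt10.sk
      by_cases hc : |h x| ≤ (2:ℝ)^k
      · rw [if_pos hc]
        simp only [hu, if_pos hc, ← enorm_eq_nnnorm, Real.enorm_eq_ofReal_abs]
        exact ENNReal.ofReal_rpow_of_nonneg (abs_nonneg _) hp₀0.le
      · rw [if_neg hc]
        simp only [hu, if_neg hc]
        rw [show ((‖(0:ℝ)‖₊ : ℝ≥0∞)) = 0 by simp]
        rw [ENNReal.zero_rpow_of_pos hp₀0]
        simp
    have hSu : (∫⁻ x, ((‖S u x‖₊ : ℝ≥0∞)) ^ p₀ ∂volume)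
        ≤ ENNReal.ofReal (A₁ ^ p₀)
          * ∫⁻ x, ENNReal.ofReal (Stmt10.sk p₀ k (|h x|)) ∂volume := by
      rw [hkeyLp (S u)]
      have h1 : (∫⁻ x, ENNReal.ofReal (Stmt10.sk p₀ k (|h x|)) ∂volume)
          = (eLpNorm u (ENNReal.ofReal p₀) volume) ^ p₀ := by
        rw [← hkeyLp u]
        exact lintegral_congr fun x => (hu_eq x).symm
      rw [h1]
      calc (eLpNorm (S u) (ENNReal.ofReal p₀) volume) ^ p₀
          ≤ (ENNReal.ofReal A₁ * eLpNorm u (ENNReal.ofReal p₀) volume) ^ p₀ :=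
            ENNReal.rpow_le_rpow (hLp u) hp₀0.le
        _ = (ENNReal.ofReal A₁) ^ p₀ * (eLpNorm u (ENNReal.ofReal p₀) volume) ^ p₀ :=
            ENNReal.mul_rpow_of_nonneg _ _ hp₀0.le
        _ = ENNReal.ofReal (A₁ ^ p₀) * (eLpNorm u (ENNReal.ofReal p₀) volume) ^ p₀ := by
            rw [ENNReal.ofReal_rpow_of_nonneg hA₁.le hp₀0.le]
    have hEbound : volume E ≤ ENNReal.ofReal ((Stmt10.ak k ^ p₀)⁻¹)
        * (ENNReal.ofReal (A₁ ^ p₀)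
            * ∫⁻ x, ENNReal.ofReal (Stmt10.sk p₀ k (|h x|)) ∂volume) := by
      have hc0 : ENNReal.ofReal (Stmt10.ak k ^ p₀) ≠ 0 :=
        (ENNReal.ofReal_pos.2 (Real.rpow_pos_of_pos hak p₀)).ne'
      have hinv : ENNReal.ofReal ((Stmt10.ak k ^ p₀)⁻¹)
          = (ENNReal.ofReal (Stmt10.ak k ^ p₀))⁻¹ :=
        ENNReal.ofReal_inv_of_pos (Real.rpow_pos_of_pos hak p₀)
      rw [hinv]
      rw [← one_mul (volume E), ← ENNReal.inv_mul_cancel hc0 ENNReal.ofReal_ne_top, mul_assoc]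
      exact mul_le_mul_right (le_trans hcheb hSu) _
    -- combine
    have hDsplit : (volume.restrict Q₁) (D k) ≤ volume W + volume E := by
      have h1 : (volume.restrict Q₁) (D k)
          = (volume.restrict Q₁) (D k ∩ W) + (volume.restrict Q₁) (D k \ W) :=
        (measure_inter_add_diff _ hWm).symm
      rw [h1]
      refine add_le_add ?_ ?_
      · rw [Measure.restrict_apply ((hDm k).inter hWm)]
        exact measure_mono (subset_trans (Set.inter_subset_left.trans Set.inter_subset_right)
          (subset_refl _)) |>.trans (measure_mono (by intro y hy; exact hy))
      · rw [Measure.restrict_apply hEm]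
        exact measure_mono Set.inter_subset_left
    have hwk0 : ∀ x, 0 ≤ Stmt10.wk ϱ k (|h x|) :=
      fun x => Stmt10.wk_nonneg hϱ k (abs_nonneg _)
    have hsk0 : ∀ x, 0 ≤ Stmt10.sk p₀ k (|h x|) :=
      fun x => Stmt10.sk_nonneg hp₀ k (abs_nonneg _)
    have hinv0 : (0:ℝ) ≤ (Stmt10.ak k ^ p₀)⁻¹ :=
      inv_nonneg.2 (Real.rpow_nonneg hak.le p₀)
    set IW := ∫⁻ x, ENNReal.ofReal (Stmt10.wk ϱ k (|h x|)) ∂volume with hIW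
    set IS := ∫⁻ x, ENNReal.ofReal (Stmt10.sk p₀ k (|h x|)) ∂volume with hIS
    have e1 : ENNReal.ofReal (A₂ * Stmt10.ck β k) * IW
        = ∫⁻ x, ENNReal.ofReal (A₂ * Stmt10.ck β k * Stmt10.wk ϱ k (|h x|)) ∂volume := by
      rw [hIW, ← lintegral_const_mul' _ _ ENNReal.ofReal_ne_top]
      exact lintegral_congr fun x =>
        (ENNReal.ofReal_mul (mul_nonneg hA₂.le hck0)).symm
    have e2 : ENNReal.ofReal (A₁ ^ p₀ * Stmt10.ck β k * (Stmt10.ak k ^ p₀)⁻¹) * IS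
        = ∫⁻ x, ENNReal.ofReal ((A₁ ^ p₀ * Stmt10.ck β k * (Stmt10.ak k ^ p₀)⁻¹)
            * Stmt10.sk p₀ k (|h x|)) ∂volume := by
      rw [hIS, ← lintegral_const_mul' _ _ ENNReal.ofReal_ne_top]
      exact lintegral_congr fun x =>
        (ENNReal.ofReal_mul (by positivity)).symm
    calc ENNReal.ofReal (Stmt10.ck β k) * (volume.restrict Q₁) (D k)
        ≤ ENNReal.ofReal (Stmt10.ck β k) * (volume W + volume E) :=
          mul_le_mul_right hDsplit _
      _ ≤ ENNReal.ofReal (Stmt10.ck β k) * ((ENNReal.ofReal A₂ * IW)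
            + (ENNReal.ofReal ((Stmt10.ak k ^ p₀)⁻¹)
                * (ENNReal.ofReal (A₁ ^ p₀) * IS))) :=
          mul_le_mul_right (add_le_add hμW hEbound) _
      _ = ENNReal.ofReal (A₂ * Stmt10.ck β k) * IW
          + ENNReal.ofReal (A₁ ^ p₀ * Stmt10.ck β k * (Stmt10.ak k ^ p₀)⁻¹) * IS := by
          rw [mul_add]
          congr 1
          · rw [← mul_assoc, ← ENNReal.ofReal_mul hck0, mul_comm (Stmt10.ck β k) A₂]
          · rw [← mul_assoc, ← mul_assoc, ← ENNReal.ofReal_mul hck0,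
              ← ENNReal.ofReal_mul (mul_nonneg hck0 hinv0)]
            ring_nf
      _ = (∫⁻ x, ENNReal.ofReal (A₂ * Stmt10.ck β k * Stmt10.wk ϱ k (|h x|)) ∂volume)
          + ∫⁻ x, ENNReal.ofReal ((A₁ ^ p₀ * Stmt10.ck β k * (Stmt10.ak k ^ p₀)⁻¹)
              * Stmt10.sk p₀ k (|h x|)) ∂volume := by rw [e1, e2]
      _ ≤ ∫⁻ x, (ENNReal.ofReal (A₂ * Stmt10.ck β k * Stmt10.wk ϱ k (|h x|))
            + ENNReal.ofReal ((A₁ ^ p₀ * Stmt10.ck β k * (Stmt10.ak k ^ p₀)⁻¹)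
                * Stmt10.sk p₀ k (|h x|))) ∂volume := le_lintegral_add _ _
      _ = ∫⁻ x, ENNReal.ofReal (A₂ * Stmt10.ck β k * Stmt10.wk ϱ k (|h x|)
            + (A₁ ^ p₀ * Stmt10.ck β k * ((Stmt10.ak k ^ p₀)⁻¹))
                * Stmt10.sk p₀ k (|h x|)) ∂volume := by
          refine lintegral_congr fun x => ?_
          rw [ENNReal.ofReal_add
            (mul_nonneg (mul_nonneg hA₂.le hck0) (hwk0 x))
            (mul_nonneg (by positivity) (hsk0 x))]
  -- sum over k and conclude
  have hDsum : (∑' k, ENNReal.ofReal (Stmt10.ck β k) * (volume.restrict Q₁) (D k))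
      ≤ ENNReal.ofReal C₂ * ∫⁻ x, ENNReal.ofReal (Stmt10.Phi (β+ϱ+1) (|h x|)) ∂volume := by
    have step1 : (∑' k, ENNReal.ofReal (Stmt10.ck β k) * (volume.restrict Q₁) (D k))
        ≤ ∑' k, ∫⁻ x, ENNReal.ofReal (A₂ * Stmt10.ck β k * Stmt10.wk ϱ k (|h x|)
            + (A₁ ^ p₀ * Stmt10.ck β k * ((Stmt10.ak k ^ p₀)⁻¹)) * Stmt10.sk p₀ k (|h x|))
            ∂volume := ENNReal.tsum_le_tsum hkC
    refine le_trans step1 ?_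
    rw [ENNReal.tsum_eq_iSup_sum]
    refine iSup_le fun F => ?_
    have hFs : (∑ k ∈ F, ∫⁻ x, ENNReal.ofReal (A₂ * Stmt10.ck β k * Stmt10.wk ϱ k (|h x|)
          + (A₁ ^ p₀ * Stmt10.ck β k * ((Stmt10.ak k ^ p₀)⁻¹)) * Stmt10.sk p₀ k (|h x|))
          ∂volume)
        ≤ ∫⁻ x, ∑ k ∈ F, ENNReal.ofReal (A₂ * Stmt10.ck β k * Stmt10.wk ϱ k (|h x|)
            + (A₁ ^ p₀ * Stmt10.ck β k * ((Stmt10.ak k ^ p₀)⁻¹)) * Stmt10.sk p₀ k (|h x|))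
            ∂volume := by
      classical
      induction F using Finset.induction_on with
      | empty => simp
      | insert a F' ha ih =>
        rw [Finset.sum_insert ha]
        calc _ ≤ (∫⁻ x, ENNReal.ofReal (A₂ * Stmt10.ck β a * Stmt10.wk ϱ a (|h x|)
              + (A₁ ^ p₀ * Stmt10.ck β a * ((Stmt10.ak a ^ p₀)⁻¹)) * Stmt10.sk p₀ a (|h x|))
              ∂volume)
            + ∫⁻ x, ∑ k ∈ F', ENNReal.ofReal (A₂ * Stmt10.ck β k * Stmt10.wk ϱ k (|h x|)
              + (A₁ ^ p₀ * Stmt10.ck β k * ((Stmt10.ak k ^ p₀)⁻¹)) * Stmt10.sk p₀ k (|h x|))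
              ∂volume := add_le_add_right ih _
          _ ≤ _ := by
            refine le_trans (le_lintegral_add _ _) (le_of_eq (lintegral_congr fun x => ?_))
            rw [Finset.sum_insert ha]
    refine le_trans hFs ?_
    have hpw : ∀ x, (∑ k ∈ F, ENNReal.ofReal (A₂ * Stmt10.ck β k * Stmt10.wk ϱ k (|h x|)
        + (A₁ ^ p₀ * Stmt10.ck β k * ((Stmt10.ak k ^ p₀)⁻¹)) * Stmt10.sk p₀ k (|h x|)))
        ≤ ENNReal.ofReal (C₂ * Stmt10.Phi (β+ϱ+1) (|h x|)) := by
      intro x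
      have hnn : ∀ i ∈ F, 0 ≤ A₂ * Stmt10.ck β i * Stmt10.wk ϱ i (|h x|)
          + (A₁ ^ p₀ * Stmt10.ck β i * ((Stmt10.ak i ^ p₀)⁻¹)) * Stmt10.sk p₀ i (|h x|) := by
        intro i _
        have h1 := Stmt10.wk_nonneg hϱ i (abs_nonneg (h x))
        have h2 := Stmt10.sk_nonneg hp₀ i (abs_nonneg (h x))
        have h3 := Stmt10.ck_nonneg hβ i
        have h4 : (0:ℝ) ≤ (Stmt10.ak i ^ p₀)⁻¹ :=
          inv_nonneg.2 (Real.rpow_nonneg (Stmt10.ak_pos i).le p₀)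
        have h5 : (0:ℝ) ≤ A₁ ^ p₀ := Real.rpow_nonneg hA₁.le p₀
        positivity
      rw [← ENNReal.ofReal_sum_of_nonneg hnn]
      exact ENNReal.ofReal_le_ofReal (hmaster (|h x|) (abs_nonneg _) F)
    calc _ ≤ ∫⁻ x, ENNReal.ofReal (C₂ * Stmt10.Phi (β+ϱ+1) (|h x|)) ∂volume :=
          lintegral_mono hpw
      _ = ENNReal.ofReal C₂ * ∫⁻ x, ENNReal.ofReal (Stmt10.Phi (β+ϱ+1) (|h x|)) ∂volume := by
          rw [← lintegral_const_mul' _ _ ENNReal.ofReal_ne_top]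
          exact lintegral_congr fun x => ENNReal.ofReal_mul hC₂0.le
  -- final assembly
  have h1 : ENNReal.ofReal Φ1 ≤ ENNReal.ofReal C := by
    refine ENNReal.ofReal_le_ofReal ?_
    have : 0 < C₂ / sA := div_pos hC₂0 hsA0
    rw [hCdef]
    linarith
  have hle2 : C₂ ≤ C * sA := by
    have hdc : C₂ / sA * sA = C₂ := div_mul_cancel₀ _ hsA0.ne'
    have hfs : 0 ≤ Φ1 * sA := mul_nonneg hΦ10 hsA0.le
    rw [hCdef]
    nlinarith
  calc (∫⁻ x in Q₁, ENNReal.ofReal (Stmt10.Phi β (|g x|)))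
      ≤ ENNReal.ofReal Φ1 * volume Q₁
        + ∑' k, ENNReal.ofReal (Stmt10.ck β k) * (volume.restrict Q₁) (D k) := hB
    _ ≤ ENNReal.ofReal Φ1 * volume Q₁
        + ENNReal.ofReal C₂ * ∫⁻ x, ENNReal.ofReal (Stmt10.Phi (β+ϱ+1) (|h x|)) ∂volume :=
        add_le_add_right hDsum _
    _ = ENNReal.ofReal Φ1 * volume Q₁
        + ENNReal.ofReal C₂ * ∫⁻ x in Q₂, ENNReal.ofReal (Stmt10.Phi (β+ϱ+1) (|f x|)) := by
        rw [hI]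
    _ ≤ ENNReal.ofReal C * volume Q₁
        + ENNReal.ofReal C * (ENNReal.ofReal sA
            * ∫⁻ x in Q₂, ENNReal.ofReal (Stmt10.Phi (β+ϱ+1) (|f x|))) := by
        refine add_le_add (mul_le_mul_left h1 _) ?_
        rw [← mul_assoc, ← ENNReal.ofReal_mul hC0.le]
        exact mul_le_mul_left (ENNReal.ofReal_le_ofReal hle2) _
    _ = ENNReal.ofReal C * (volume Q₁ + ENNReal.ofReal sA
          * ∫⁻ x in Q₂, ENNReal.ofReal (Stmt10.Phi (β+ϱ+1) (|f x|))) := by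
        rw [mul_add]
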